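/- arXiv:2011.11746 — 7 statements merged into one kernel-verified Lean document; each statement's English description precedes it below -/
import Mathlib

section
/- Let a_L, a_R > 0 and U_L, U_R be real numbers. Define Q_N = (U_R - U_L)·a_L U_L - (1/2)(a_R U_R² - a_L U_L²). Then Q_N = -(a_L/2)(1 - a_L/a_R) U_L² - (1/(2 a_R))(a_R U_R - a_L U_L)². In particular Q_N ≤ -(a_L/2)(1 - a_L/a_R) U_L². -/
/-- The DGSEM interface term `Q_N` with upwind flux equals the PDE interface
contribution plus a nonpositive dissipation measuring the Rankine-Hugoniot violation. -/
theorem stmt2 (aL aR UL UR : ℝ) (haL : 0 < aL) (haR : 0 < aR) :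
    (UR - UL) * (aL * UL) - (1 / 2) * (aR * UR ^ 2 - aL * UL ^ 2)
      = -(aL / 2) * (1 - aL / aR) * UL ^ 2 - (1 / (2 * aR)) * (aR * UR - aL * UL) ^ 2 ∧
    (UR - UL) * (aL * UL) - (1 / 2) * (aR * UR ^ 2 - aL * UL ^ 2)
      ≤ -(aL / 2) * (1 - aL / aR) * UL ^ 2 := by
  have hR := haR.ne'
  constructor
  · field_simp
    ring
  · have h : (1 / (2 * aR)) * (aR * UR - aL * UL) ^ 2 ≥ 0 := by positivity
    have heq : (UR - UL) * (aL * UL) - (1 / 2) * (aR * UR ^ 2 - aL * UL ^ 2)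
      = -(aL / 2) * (1 - aL / aR) * UL ^ 2 - (1 / (2 * aR)) * (aR * UR - aL * UL) ^ 2 := by
      field_simp; ring
    linarith
end

section
/- Consider the scalar advection problem u_t + a u_x = 0 on [-1,1] with a = a_L > 0 for x ≤ 0 and a = a_R > 0 for x > 0, homogeneous inflow boundary condition u(-1,t) = 0, and the conservative interface condition a_L u(0⁻,t) = a_R u(0⁺,t). For smooth solutions on each subdomain, the L² energy satisfies (1/2) d/dt (‖u‖²_L + ‖u‖²_R) ≤ -(a_L/2)(1 - a_L/a_R) u(0⁻,t)². -/
open MeasureTheory Metric intervalIntegral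

private lemma energy_deriv (a : ℝ) (u : ℝ → ℝ → ℝ)
    (hu : ContDiff ℝ 1 (Function.uncurry u)) (p q t : ℝ) (hpq : p ≤ q)
    (hpde : ∀ x s : ℝ, x ∈ Set.Icc p q →
      deriv (fun τ => u x τ) s + a * deriv (fun y => u y s) x = 0) :
    HasDerivAt (fun τ => ∫ x in p..q, u x τ ^ 2) (a * (u p t ^ 2 - u q t ^ 2)) t := by
  have hdiff := hu.differentiable one_ne_zero
  have hCu : Continuous (Function.uncurry u) := hu.continuous
  have hCf : Continuous fun z : ℝ × ℝ => fderiv ℝ (Function.uncurry u) z :=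
    hu.continuous_fderiv one_ne_zero
  -- directional derivatives
  set ut : ℝ → ℝ → ℝ := fun x τ => fderiv ℝ (Function.uncurry u) (x, τ) (0, 1) with hut
  set ux : ℝ → ℝ → ℝ := fun x τ => fderiv ℝ (Function.uncurry u) (x, τ) (1, 0) with hux
  have hdt : ∀ x τ : ℝ, HasDerivAt (fun s => u x s) (ut x τ) τ := by
    intro x τ
    have hc : HasDerivAt (fun s : ℝ => ((x, s) : ℝ × ℝ)) ((0 : ℝ), (1 : ℝ)) τ :=
      (hasDerivAt_const τ x).prodMk (hasDerivAt_id τ)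
    exact ((hdiff (x, τ)).hasFDerivAt).comp_hasDerivAt τ hc
  have hdx : ∀ x τ : ℝ, HasDerivAt (fun y => u y τ) (ux x τ) x := by
    intro x τ
    have hc : HasDerivAt (fun y : ℝ => ((y, τ) : ℝ × ℝ)) ((1 : ℝ), (0 : ℝ)) x :=
      (hasDerivAt_id x).prodMk (hasDerivAt_const x τ)
    exact ((hdiff (x, τ)).hasFDerivAt).comp_hasDerivAt x hc
  have hCut : Continuous fun z : ℝ × ℝ => ut z.1 z.2 := by
    have : Continuous fun z : ℝ × ℝ => fderiv ℝ (Function.uncurry u) z ((0 : ℝ), (1 : ℝ)) :=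
      hCf.clm_apply continuous_const
    simpa [hut] using this
  have hCuu : Continuous fun z : ℝ × ℝ => u z.1 z.2 := hCu
  -- F' τ x = derivative in τ of u x τ ^ 2
  set F' : ℝ → ℝ → ℝ := fun τ x => 2 * u x τ * ut x τ with hF'
  have hdsq : ∀ x τ : ℝ, HasDerivAt (fun s => u x s ^ 2) (F' τ x) τ := by
    intro x τ
    have := (hdt x τ).fun_pow 2
    simpa [hF'] using this.congr_deriv (by ring)
  have hCF' : Continuous fun z : ℝ × ℝ => F' z.2 z.1 := by
    apply Continuous.mul
    · exact (continuous_const.mul hCuu)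
    · exact hCut
  -- bound on a compact set
  obtain ⟨M, hM⟩ := ((isCompact_Icc (a := p) (b := q)).prod
    (isCompact_Icc (a := t - 1) (b := t + 1))).exists_bound_of_continuousOn hCF'.continuousOn
  have key := hasDerivAt_integral_of_dominated_loc_of_deriv_le (μ := volume)
    (F := fun τ x => u x τ ^ 2) (F' := F') (x₀ := t) (a := p) (b := q)
    (bound := fun _ => M) (ball_mem_nhds t one_pos)
    (Filter.Eventually.of_forall fun τ =>
      ((hCuu.comp (continuous_id.prodMk continuous_const)).pow 2).aestronglyMeasurable)
    (Continuous.intervalIntegrable (by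
      exact (hCuu.comp (continuous_id.prodMk continuous_const)).pow 2) p q)
    (by
      have hc : Continuous (F' t) := by
        have := hCF'.comp ((continuous_id : Continuous fun x : ℝ => x).prodMk (continuous_const (y := t)))
        simpa [Function.comp_def] using this
      exact hc.aestronglyMeasurable)
    (Filter.Eventually.of_forall fun x hx τ hτ => by
      have hx' : x ∈ Set.Icc p q := Set.mem_Icc_of_Ioc (Set.uIoc_of_le hpq ▸ hx)
      have hτ' : τ ∈ Set.Icc (t - 1) (t + 1) := by
        have := mem_ball_iff_norm.mp hτ
        constructor <;> [skip; skip] <;>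
          · have := abs_lt.mp (by simpa [Real.norm_eq_abs] using this)
            linarith [this.1, this.2]
      simpa using hM (x, τ) ⟨hx', hτ'⟩)
    (intervalIntegrable_const)
    (Filter.Eventually.of_forall fun x _ τ _ => hdsq x τ)
  have hD := key.2
  -- compute the integral via FTC
  have hftc : (∫ x in p..q, 2 * u x t * ux x t) = u q t ^ 2 - u p t ^ 2 := by
    apply integral_eq_sub_of_hasDerivAt
    · intro x _
      have := (hdx x t).fun_pow 2
      simpa using this.congr_deriv (by ring)
    · apply Continuous.intervalIntegrable
      have hCux : Continuous fun x : ℝ => ux x t := by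
        have : Continuous fun z : ℝ × ℝ => fderiv ℝ (Function.uncurry u) z ((1 : ℝ), (0 : ℝ)) :=
          hCf.clm_apply continuous_const
        exact (this.comp (continuous_id.prodMk continuous_const))
      exact (continuous_const.mul (hCuu.comp (continuous_id.prodMk continuous_const))).mul hCux
  have hval : (∫ x in p..q, F' t x) = a * (u p t ^ 2 - u q t ^ 2) := by
    have hcongr : (∫ x in p..q, F' t x) = ∫ x in p..q, -a * (2 * u x t * ux x t) := by
      apply integral_congr
      intro x hx
      have hx' : x ∈ Set.Icc p q := by rwa [Set.uIcc_of_le hpq] at hx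
      have hpd := hpde x t hx'
      rw [(hdt x t).deriv, (hdx x t).deriv] at hpd
      have h2 : ut x t = -(a * ux x t) := by linarith
      simp only [hF', h2]
      ring
    rw [hcongr, intervalIntegral.integral_const_mul, hftc]
    ring
  rw [hval] at hD
  exact hD

/-- Energy dynamics for scalar advection with a discontinuous wave speed and the
conservative (Rankine-Hugoniot) interface condition: the L² energy rate satisfies
`(1/2) d/dt (‖u‖²_L + ‖u‖²_R) ≤ -(a_L/2)(1 - a_L/a_R) u(0⁻,t)²`. -/
theorem stmt4 (aL aR : ℝ) (haL : 0 < aL) (haR : 0 < aR)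
    (uL uR : ℝ → ℝ → ℝ)
    (hregL : ContDiff ℝ 1 (Function.uncurry uL))
    (hregR : ContDiff ℝ 1 (Function.uncurry uR))
    (hpdeL : ∀ x t : ℝ, x ∈ Set.Icc (-1 : ℝ) 0 →
      deriv (fun τ => uL x τ) t + aL * deriv (fun y => uL y t) x = 0)
    (hpdeR : ∀ x t : ℝ, x ∈ Set.Icc (0 : ℝ) 1 →
      deriv (fun τ => uR x τ) t + aR * deriv (fun y => uR y t) x = 0)
    (hbc : ∀ t : ℝ, uL (-1) t = 0)
    (hint : ∀ t : ℝ, aL * uL 0 t = aR * uR 0 t) :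
    ∀ t E' : ℝ,
      HasDerivAt (fun τ => (∫ x in (-1 : ℝ)..0, (uL x τ) ^ 2)
                           + ∫ x in (0 : ℝ)..1, (uR x τ) ^ 2) E' t →
      (1 / 2) * E' ≤ -(aL / 2) * (1 - aL / aR) * (uL 0 t) ^ 2 := by
  intro t E' hE
  have hL := energy_deriv aL uL hregL (-1) 0 t (by norm_num) hpdeL
  have hR := energy_deriv aR uR hregR 0 1 t (by norm_num) hpdeR
  have hsum := hL.add hR
  have hEq : E' = aL * (uL (-1) t ^ 2 - uL 0 t ^ 2) + aR * (uR 0 t ^ 2 - uR 1 t ^ 2) :=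
    hE.unique hsum
  rw [hEq, hbc t]
  have hi := hint t
  have h0 : uR 0 t = aL * uL 0 t / aR := by field_simp; linarith
  rw [h0]
  have h1 : (0:ℝ) ≤ aR * uR 1 t ^ 2 := by positivity
  have haR' : aR ≠ 0 := ne_of_gt haR
  field_simp
  nlinarith [sq_nonneg (uL 0 t), mul_nonneg (sq_nonneg (aR * aR)) (sq_nonneg (uR 1 t)),
    mul_pos haR haR]
end

section
/- Let A_L, A_R be symmetric matrices as above and define the DGSEM interface term Q_N = ⟦Uᵀ⟧F* - (1/2)⟦Uᵀ A U⟧ with the upwind numerical flux F* satisfying the Rankine-Hugoniot condition. Then Q_N = Q(W_L, W_R) - (1/2)R⁺ - (1/2)R⁻, where Q(W_L, W_R) = -(1/2){W_L⁺ᵀ Λ̄_L⁺ W_L⁺ - W*⁺ᵀ Λ̄_R⁺ W*⁺} - (1/2){W_R⁻ᵀ|Λ̄_R⁻|W_R⁻ - W*⁻ᵀ|Λ̄_L⁻|W*⁻}, R⁺ = ‖√(Λ̄_R⁺)(W*⁺ - W_R⁺)‖² ≥ 0, R⁻ = ‖√(|Λ̄_L⁻|)(W*⁻ - W_L⁻)‖²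 ≥ 0. In particular Q_N ≤ Q(W_L, W_R). -/
open Matrix Finset

lemma stmt10_dot (n : ℕ) (P : Matrix (Fin n) (Fin n) ℝ) (u lam g : Fin n → ℝ) :
    u ⬝ᵥ P.mulVec ((Matrix.diagonal lam).mulVec g)
      = ∑ i, lam i * (Pᵀ.mulVec u) i * g i := by
  rw [Matrix.dotProduct_mulVec, Matrix.mulVec_transpose]
  simp [dotProduct, Matrix.mulVec_diagonal]
  exact Finset.sum_congr rfl fun i _ => by ring


/-- Inferred stability of the DGSEM interface term for a 1D symmetric system:
`Q_N = ⟦Uᵀ⟧F* - (1/2)⟦UᵀAU⟧ = Q(W_L, W_R) - (1/2)R⁺ - (1/2)R⁻` with `R± ≥ 0`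
measuring the failure of the traces to match the upwind Rankine-Hugoniot states;
in particular `Q_N ≤ Q(W_L, W_R)`, the PDE interface contribution. -/
theorem stmt10 (n nplus : ℕ)
    (PL PR AL AR : Matrix (Fin n) (Fin n) ℝ) (lamL lamR : Fin n → ℝ)
    (hPL : PLᵀ * PL = 1) (hPR : PRᵀ * PR = 1)
    (hAL : AL = PL * Matrix.diagonal lamL * PLᵀ)
    (hAR : AR = PR * Matrix.diagonal lamR * PRᵀ)
    (hLpos : ∀ i : Fin n, (i : ℕ) < nplus → 0 < lamL i)
    (hLneg : ∀ i : Fin n, nplus ≤ (i : ℕ) → lamL i < 0)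
    (hRpos : ∀ i : Fin n, (i : ℕ) < nplus → 0 < lamR i)
    (hRneg : ∀ i : Fin n, nplus ≤ (i : ℕ) → lamR i < 0)
    (UL UR Wstar Fstar : Fin n → ℝ)
    (WL WR : Fin n → ℝ) (hWL : WL = PLᵀ.mulVec UL) (hWR : WR = PRᵀ.mulVec UR)
    -- upwind flux satisfying the Rankine-Hugoniot condition
    (hFL : Fstar = PL.mulVec ((Matrix.diagonal lamL).mulVec
        (fun i => if (i : ℕ) < nplus then WL i else Wstar i)))
    (hFR : Fstar = PR.mulVec ((Matrix.diagonal lamR).mulVec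
        (fun i => if (i : ℕ) < nplus then Wstar i else WR i)))
    (QN Q Rp Rm : ℝ)
    -- the DGSEM interface term
    (hQN : QN = (UR - UL) ⬝ᵥ Fstar
        - (1 / 2) * (UR ⬝ᵥ AR.mulVec UR - UL ⬝ᵥ AL.mulVec UL))
    -- the PDE interface contribution
    (hQ : Q = -(1 / 2) * ((∑ i ∈ Finset.univ.filter (fun i : Fin n => (i : ℕ) < nplus),
              lamL i * (WL i) ^ 2)
            - ∑ i ∈ Finset.univ.filter (fun i : Fin n => (i : ℕ) < nplus),
              lamR i * (Wstar i) ^ 2)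
        - (1 / 2) * ((∑ i ∈ Finset.univ.filter (fun i : Fin n => nplus ≤ (i : ℕ)),
              |lamR i| * (WR i) ^ 2)
            - ∑ i ∈ Finset.univ.filter (fun i : Fin n => nplus ≤ (i : ℕ)),
              |lamL i| * (Wstar i) ^ 2))
    -- the dissipation terms
    (hRp : Rp = ∑ i ∈ Finset.univ.filter (fun i : Fin n => (i : ℕ) < nplus),
        (Real.sqrt (lamR i) * (Wstar i - WR i)) ^ 2)
    (hRm : Rm = ∑ i ∈ Finset.univ.filter (fun i : Fin n => nplus ≤ (i : ℕ)),
        (Real.sqrt |lamL i| * (Wstar i - WL i)) ^ 2) :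
    QN = Q - (1 / 2) * Rp - (1 / 2) * Rm ∧ 0 ≤ Rp ∧ 0 ≤ Rm ∧ QN ≤ Q := by
  have hRp0 : 0 ≤ Rp := hRp ▸ Finset.sum_nonneg fun i _ => sq_nonneg _
  have hRm0 : 0 ≤ Rm := hRm ▸ Finset.sum_nonneg fun i _ => sq_nonneg _
  have e1 : UR ⬝ᵥ Fstar
      = ∑ i, lamR i * WR i * (if (i : ℕ) < nplus then Wstar i else WR i) := by
    rw [hFR, stmt10_dot, ← hWR]
  have e2 : UL ⬝ᵥ Fstar
      = ∑ i, lamL i * WL i * (if (i : ℕ) < nplus then WL i else Wstar i) := by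
    rw [hFL, stmt10_dot, ← hWL]
  have e3 : UR ⬝ᵥ AR.mulVec UR = ∑ i, lamR i * WR i * WR i := by
    rw [hAR, Matrix.mul_assoc, ← Matrix.mulVec_mulVec, ← Matrix.mulVec_mulVec,
      stmt10_dot, ← hWR]
  have e4 : UL ⬝ᵥ AL.mulVec UL = ∑ i, lamL i * WL i * WL i := by
    rw [hAL, Matrix.mul_assoc, ← Matrix.mulVec_mulVec, ← Matrix.mulVec_mulVec,
      stmt10_dot, ← hWL]
  have key : QN = Q - (1 / 2) * Rp - (1 / 2) * Rm := by
    rw [hQN, hQ, hRp, hRm, sub_dotProduct, e1, e2, e3, e4]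
    simp only [Finset.sum_filter]
    rw [show ∀ a b c d e f g h : ℝ, a - b - (1/2 : ℝ) * (c - d) = e - f - g - h ↔
        a - b - (1/2) * (c - d) - (e - f - g - h) = 0 from fun _ _ _ _ _ _ _ _ => by
      constructor <;> intro <;> linarith]
    simp only [neg_mul, Finset.mul_sum, ← Finset.sum_sub_distrib, ← Finset.sum_neg_distrib,
      ← Finset.sum_add_distrib, sub_neg_eq_add]
    refine Eq.trans (Finset.sum_congr rfl fun i _ => ?_) (Finset.sum_const_zero)
    by_cases hi : (i:ℕ) < nplus
    · have hi' : ¬ nplus ≤ (i:ℕ) := not_le.mpr hi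
      simp only [hi, if_true, hi', if_false]
      have h1 : Real.sqrt (lamR i) ^ 2 = lamR i := Real.sq_sqrt (hRpos i hi).le
      have h2 : (Real.sqrt (lamR i) * (Wstar i - WR i)) ^ 2
          = lamR i * (Wstar i - WR i) ^ 2 := by rw [mul_pow, h1]
      rw [h2]; ring
    · have hi2 := hi
      simp only [hi, if_false]
      push_neg at hi
      simp only [hi, if_true]
      have hL := hLneg i hi
      have hR := hRneg i hi
      have a1 : |lamL i| = -lamL i := abs_of_neg hL
      have a2 : |lamR i| = -lamR i := abs_of_neg hR
      have h1 : Real.sqrt |lamL i| ^ 2 = |lamL i| := Real.sq_sqrt (abs_nonneg _)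
      have h2 : (Real.sqrt |lamL i| * (Wstar i - WL i)) ^ 2
          = -lamL i * (Wstar i - WL i) ^ 2 := by rw [mul_pow, h1, a1]
      rw [h2, a1, a2]; ring
  exact ⟨key, hRp0, hRm0, by nlinarith⟩
end

section
/- Suppose Λ̄_L⁺, Λ̄_R⁺ are positive diagonal matrices, |Λ̄_L⁻|, |Λ̄_R⁻| positive diagonal matrices, and the coupling relations w*⁺ = M̄⁺ w_L⁺, w*⁻ = M̄⁻ w_R⁻ hold with matrices M̄±. If there exist μ⁺ > 0 and μ⁻ > 0 such that Λ̄_L⁺ - μ⁺ (M̄⁺)ᵀ Λ̄_R⁺ M̄⁺ is positive semidefinite and μ⁻|Λ̄_R⁻| - (M̄⁻)ᵀ|Λ̄_L⁻| M̄⁻ is positive semidefinite, then the discounted interface term Q_B = -(1/2){w_L⁺ᵀΛ̄_L⁺w_L⁺ - μ⁺ w*⁺ᵀΛ̄_R⁺w*⁺} - (1/2){μ⁻ w_R⁻ᵀ|Λ̄_R⁻|w_R⁻ - w*⁻ᵀ|Λ̄_L⁻|w*⁻} satisfies Q_B ≤ 0 for all w_L⁺, w_R⁻. -/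
open Matrix

/-- If discount factors `μ± > 0` make `Λ̄_L⁺ - μ⁺ M̄⁺ᵀ Λ̄_R⁺ M̄⁺` and
`μ⁻|Λ̄_R⁻| - M̄⁻ᵀ|Λ̄_L⁻|M̄⁻` positive semidefinite, then the discounted interface
term `Q_B` is nonpositive for all characteristic data. -/
theorem stmt11 (p m : ℕ)
    (lamLp lamRp : Fin p → ℝ) (lamLm lamRm : Fin m → ℝ)
    (hLp : ∀ i, 0 < lamLp i) (hRp : ∀ i, 0 < lamRp i)
    (hLm : ∀ i, 0 < lamLm i) (hRm : ∀ i, 0 < lamRm i)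
    (Mp : Matrix (Fin p) (Fin p) ℝ) (Mm : Matrix (Fin m) (Fin m) ℝ)
    (μp μm : ℝ) (hμp : 0 < μp) (hμm : 0 < μm)
    (h1 : (Matrix.diagonal lamLp - μp • (Mpᵀ * Matrix.diagonal lamRp * Mp)).PosSemidef)
    (h2 : (μm • Matrix.diagonal lamRm - Mmᵀ * Matrix.diagonal lamLm * Mm).PosSemidef) :
    ∀ (wLp : Fin p → ℝ) (wRm : Fin m → ℝ),
      -(1 / 2) * (wLp ⬝ᵥ (Matrix.diagonal lamLp).mulVec wLp
          - μp * (Mp.mulVec wLp ⬝ᵥ (Matrix.diagonal lamRp).mulVec (Mp.mulVec wLp)))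
        - (1 / 2) * (μm * (wRm ⬝ᵥ (Matrix.diagonal lamRm).mulVec wRm)
          - Mm.mulVec wRm ⬝ᵥ (Matrix.diagonal lamLm).mulVec (Mm.mulVec wRm)) ≤ 0 := by
  intro wLp wRm
  have e1 : Mp.mulVec wLp ⬝ᵥ (Matrix.diagonal lamRp).mulVec (Mp.mulVec wLp)
      = wLp ⬝ᵥ (Mpᵀ * Matrix.diagonal lamRp * Mp).mulVec wLp := by
    rw [← Matrix.mulVec_mulVec, ← Matrix.mulVec_mulVec]
    conv_rhs => rw [Matrix.dotProduct_mulVec, Matrix.vecMul_transpose]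
  have e2 : Mm.mulVec wRm ⬝ᵥ (Matrix.diagonal lamLm).mulVec (Mm.mulVec wRm)
      = wRm ⬝ᵥ (Mmᵀ * Matrix.diagonal lamLm * Mm).mulVec wRm := by
    rw [← Matrix.mulVec_mulVec, ← Matrix.mulVec_mulVec]
    conv_rhs => rw [Matrix.dotProduct_mulVec, Matrix.vecMul_transpose]
  have q1 := h1.dotProduct_mulVec_nonneg wLp
  have q2 := h2.dotProduct_mulVec_nonneg wRm
  rw [Matrix.sub_mulVec, dotProduct_sub, Matrix.smul_mulVec,
    dotProduct_smul, smul_eq_mul, star_trivial] at q1 q2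
  rw [e1, e2]
  linarith
end

section
/- For the 1D symmetrized acoustic system with sound speeds c_L, c_R > 0 and impedances z_L = ρ_L c_L, z_R = ρ_R c_R, the Rankine-Hugoniot condition A_L u(0⁻) = A_R u(0⁺) (with A = [[0, ρc²],[1/ρ, 0]]) determines the upwind interface state uniquely: given the left state (p_L, v_L) and right state (p_R, v_R), the system for the transmitted/reflected characteristic amplitudes has a unique solution because the eigenvector matrix is the same constant orthogonal matrix on both sides (eigenvectors (1, 1/z)-type directions in symmetrized variables are (1, ±1)/√2), so the coupling matrix M = M_LR⁻¹ M_RL exists and is diagonal. -/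
open Matrix

/-- 1D symmetrized acoustics: the symmetrized coefficient matrix `Aˢ = [[0,c],[c,0]]`
has the same constant orthogonal eigenvector matrix `P = (1/√2)[[1,1],[1,-1]]` on both
sides of the interface (eigenvalues `±c`), so the interface matrix
`M_LR = M_L⁻ - M_R⁺` (with `M± = PΛ±`) is invertible and the Rankine-Hugoniot
coupling matrix `M = M_LR⁻¹ M_RL` exists and is diagonal; hence the upwind interface
state is uniquely determined. -/
theorem stmt14 (ρL ρR cL cR : ℝ) (hρL : 0 < ρL) (hρR : 0 < ρR)
    (hcL : 0 < cL) (hcR : 0 < cR) :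
    let P : Matrix (Fin 2) (Fin 2) ℝ := (Real.sqrt 2)⁻¹ • !![1, 1; 1, -1]
    let AsL : Matrix (Fin 2) (Fin 2) ℝ := !![0, cL; cL, 0]
    let AsR : Matrix (Fin 2) (Fin 2) ℝ := !![0, cR; cR, 0]
    let MLR : Matrix (Fin 2) (Fin 2) ℝ :=
      P * Matrix.diagonal ![0, -cL] - P * Matrix.diagonal ![cR, 0]
    let MRL : Matrix (Fin 2) (Fin 2) ℝ :=
      P * Matrix.diagonal ![0, -cR] - P * Matrix.diagonal ![cL, 0]
    Pᵀ * P = 1 ∧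
    AsL = P * Matrix.diagonal ![cL, -cL] * Pᵀ ∧
    AsR = P * Matrix.diagonal ![cR, -cR] * Pᵀ ∧
    IsUnit MLR ∧
    (∃ d : Fin 2 → ℝ, MLR⁻¹ * MRL = Matrix.diagonal d) := by
  intro P AsL AsR MLR MRL
  have h2 : (Real.sqrt 2)⁻¹ * (Real.sqrt 2)⁻¹ = 2⁻¹ := by
    rw [← mul_inv]
    norm_num [Real.mul_self_sqrt]
  have hsq : ((Real.sqrt 2)⁻¹ : ℝ) ^ 2 = 2⁻¹ := by rw [sq]; exact h2
  have hP : Pᵀ * P = 1 := by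
    ext i j
    fin_cases i <;> fin_cases j <;>
      simp [P, Matrix.mul_apply, Fin.sum_univ_two, Matrix.transpose_apply, Matrix.vecHead, Matrix.vecTail] <;>
      (first| ring1 | linear_combination 2 * h2 | linear_combination 2 * hsq | linear_combination (-2:ℝ) * hsq | linear_combination (-2 : ℝ) * h2)
  have hMLR : MLR = P * Matrix.diagonal ![-cR, -cL] := by
    show P * _ - P * _ = _
    rw [← Matrix.mul_sub]
    congr 1
    ext i j
    fin_cases i <;> fin_cases j <;> simp [Matrix.diagonal]
  have hMRL : MRL = P * Matrix.diagonal ![-cL, -cR] := by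
    show P * _ - P * _ = _
    rw [← Matrix.mul_sub]
    congr 1
    ext i j
    fin_cases i <;> fin_cases j <;> simp [Matrix.diagonal]
  have hdetP : P.det = -1 := by
    show ((Real.sqrt 2)⁻¹ • !![1, 1; 1, -1]).det = -1
    rw [Matrix.det_smul, Matrix.det_fin_two_of, Fintype.card_fin, hsq]
    norm_num
  have hdet : MLR.det = -(cR * cL) := by
    rw [hMLR, Matrix.det_mul, hdetP, Matrix.det_diagonal]
    simp [Fin.prod_univ_two]
  have hU : IsUnit MLR := by
    apply (Matrix.isUnit_iff_isUnit_det _).mpr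
    rw [hdet]
    exact (isUnit_iff_ne_zero.mpr (by positivity)).neg
  refine ⟨hP, ?_, ?_, hU, ?_⟩
  · ext i j
    fin_cases i <;> fin_cases j <;>
      simp [P, AsL, Matrix.mul_apply, Fin.sum_univ_two, Matrix.diagonal,
        Matrix.transpose_apply, Matrix.vecHead, Matrix.vecTail] <;>
      (first| ring1 | linear_combination (2 * cL) * h2 | linear_combination (2 * cL) * hsq | linear_combination (-2 * cL) * hsq | linear_combination (-2 * cL) * h2)
  · ext i j
    fin_cases i <;> fin_cases j <;>
      simp [P, AsR, Matrix.mul_apply, Fin.sum_univ_two, Matrix.diagonal,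
        Matrix.transpose_apply, Matrix.vecHead, Matrix.vecTail] <;>
      (first| ring1 | linear_combination (2 * cR) * h2 | linear_combination (2 * cR) * hsq | linear_combination (-2 * cR) * hsq | linear_combination (-2 * cR) * h2)
  · refine ⟨![cL / cR, cR / cL], ?_⟩
    have hd : Matrix.diagonal ![-cR, -cL] * Matrix.diagonal ![cL / cR, cR / cL]
        = Matrix.diagonal ![-cL, -cR] := by
      rw [Matrix.diagonal_mul_diagonal]
      ext i j
      fin_cases i <;> fin_cases j <;> simp [Matrix.diagonal] <;> field_simp <;> ring
    have key : MRL = MLR * Matrix.diagonal ![cL / cR, cR / cL] := by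
      rw [hMLR, hMRL, Matrix.mul_assoc, hd]
    rw [key, ← Matrix.mul_assoc,
      Matrix.nonsing_inv_mul _ ((Matrix.isUnit_iff_isUnit_det _).mp hU), Matrix.one_mul]
end

section
/- Let A_L = P Λ_L Pᵀ and A_R = P Λ_R Pᵀ be symmetric n×n matrices sharing the same orthogonal eigenvector matrix P, with no zero eigenvalues and the same inertia (number of positive eigenvalues n⁺). Then the matrix M_LR = P Λ_L⁻ - P Λ_R⁺ (restricted to the n-dimensional space of unknowns (w*⁺, w*⁻)) is invertible, and the coupling matrix M = M_LR⁻¹ M_RL is diagonal with diagonal entries λ_{L,j}/λ_{R,j} for the first n⁺ components and λ_{R,j}/λ_{L,j} for the remaining components; i.e., w*⁺ = diag(λ_{L,j}⁺/λ_{R,j}⁺) w_L⁺ and w*⁻ = diag(λ_{R,j}⁻/λ_{L,j}⁻) w_R⁻. -/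
open Matrix

/-- Shared eigenvectors across the jump: with `A_{L,R} = P Λ_{L,R} Pᵀ`, `PᵀP = I`,
no zero eigenvalues and common inertia, the matrix `M_LR = PΛ_L⁻ - PΛ_R⁺` is
invertible and the coupling matrix `M = M_LR⁻¹M_RL` is diagonal with entries
`λ_{L,j}/λ_{R,j}` on the positive block and `λ_{R,j}/λ_{L,j}` on the negative block. -/
theorem stmt15 (n nplus : ℕ) (P : Matrix (Fin n) (Fin n) ℝ) (hP : Pᵀ * P = 1)
    (lamL lamR : Fin n → ℝ)
    (hpos : ∀ i : Fin n, (i : ℕ) < nplus → 0 < lamL i ∧ 0 < lamR i)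
    (hneg : ∀ i : Fin n, nplus ≤ (i : ℕ) → lamL i < 0 ∧ lamR i < 0) :
    IsUnit (P * Matrix.diagonal (fun i : Fin n => if (i : ℕ) < nplus then 0 else lamL i)
        - P * Matrix.diagonal (fun i : Fin n => if (i : ℕ) < nplus then lamR i else 0)) ∧
    (P * Matrix.diagonal (fun i : Fin n => if (i : ℕ) < nplus then 0 else lamL i)
        - P * Matrix.diagonal (fun i : Fin n => if (i : ℕ) < nplus then lamR i else 0))⁻¹
      * (P * Matrix.diagonal (fun i : Fin n => if (i : ℕ) < nplus then 0 else lamR i)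
        - P * Matrix.diagonal (fun i : Fin n => if (i : ℕ) < nplus then lamL i else 0))
      = Matrix.diagonal
          (fun i : Fin n => if (i : ℕ) < nplus then lamL i / lamR i else lamR i / lamL i) := by
  set d : Fin n → ℝ := fun i => if (i : ℕ) < nplus then -lamR i else lamL i with hd
  set d' : Fin n → ℝ := fun i => if (i : ℕ) < nplus then -lamL i else lamR i with hd'
  have hdne : ∀ i, d i ≠ 0 := by
    intro i
    by_cases h : (i : ℕ) < nplus
    · simp only [hd, if_pos h]
      exact neg_ne_zero.mpr (ne_of_gt (hpos i h).2)
    · simp only [hd, if_neg h]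
      exact ne_of_lt (hneg i (le_of_not_gt h)).1
  have hPu : IsUnit P := by
    have : IsUnit P.det := by
      have := congrArg Matrix.det hP
      rw [Matrix.det_mul, Matrix.det_transpose, Matrix.det_one] at this
      exact IsUnit.of_mul_eq_one _ this
    exact (Matrix.isUnit_iff_isUnit_det P).mpr this
  have hM : P * Matrix.diagonal (fun i : Fin n => if (i : ℕ) < nplus then 0 else lamL i)
        - P * Matrix.diagonal (fun i : Fin n => if (i : ℕ) < nplus then lamR i else 0)
      = P * Matrix.diagonal d := by
    rw [← Matrix.mul_sub, Matrix.diagonal_sub]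
    have hfun : (fun i : Fin n => (if (i : ℕ) < nplus then (0:ℝ) else lamL i)
        - if (i : ℕ) < nplus then lamR i else 0) = d := by
      funext i
      by_cases h : (i : ℕ) < nplus <;> simp [hd, h]
    rw [hfun]
  have hM' : P * Matrix.diagonal (fun i : Fin n => if (i : ℕ) < nplus then 0 else lamR i)
        - P * Matrix.diagonal (fun i : Fin n => if (i : ℕ) < nplus then lamL i else 0)
      = P * Matrix.diagonal d' := by
    rw [← Matrix.mul_sub, Matrix.diagonal_sub]
    have hfun : (fun i : Fin n => (if (i : ℕ) < nplus then (0:ℝ) else lamR i)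
        - if (i : ℕ) < nplus then lamL i else 0) = d' := by
      funext i
      by_cases h : (i : ℕ) < nplus <;> simp [hd', h]
    rw [hfun]
  have hDu : IsUnit (Matrix.diagonal d) := by
    rw [Matrix.isUnit_diagonal]
    exact IsUnit.of_mul_eq_one (a := d) (fun i => (d i)⁻¹)
      (funext fun i => mul_inv_cancel₀ (hdne i))
  rw [hM, hM']
  refine ⟨hPu.mul hDu, ?_⟩
  let u : (Fin n → ℝ)ˣ := ⟨d, fun i => (d i)⁻¹,
    funext fun i => mul_inv_cancel₀ (hdne i),
    funext fun i => inv_mul_cancel₀ (hdne i)⟩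
  have hinv : Ring.inverse d = fun i => (d i)⁻¹ := by
    rw [show d = (u : Fin n → ℝ) from rfl, Ring.inverse_unit]
    rfl
  rw [Matrix.mul_inv_rev, Matrix.inv_diagonal, hinv]
  have hPdet : IsUnit P.det := (Matrix.isUnit_iff_isUnit_det P).mp hPu
  calc Matrix.diagonal (fun i => (d i)⁻¹) * P⁻¹ * (P * Matrix.diagonal d')
      = Matrix.diagonal (fun i => (d i)⁻¹) * (P⁻¹ * (P * Matrix.diagonal d')) := by
        rw [Matrix.mul_assoc]
    _ = Matrix.diagonal (fun i => (d i)⁻¹) * Matrix.diagonal d' := by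
        rw [Matrix.nonsing_inv_mul_cancel_left _ _ hPdet]
    _ = _ := by
        rw [Matrix.diagonal_mul_diagonal]
        have hfun : (fun i : Fin n => (d i)⁻¹ * d' i) = fun i : Fin n =>
            if (i : ℕ) < nplus then lamL i / lamR i else lamR i / lamL i := by
          funext i
          by_cases h : (i : ℕ) < nplus <;>
            simp [hd, hd', h, div_eq_mul_inv, mul_comm, inv_neg]
        rw [hfun]
end

section
/- Under the shared-eigenvector assumption (coupling w*⁺ = diag(λ_{L,j}/λ_{R,j}) w_L⁺ componentwise, all λ's positive), the PDE interface contribution from the right-going waves, -(1/2){w_L⁺ᵀ Λ̄_L⁺ w_L⁺ - w*⁺ᵀ Λ̄_R⁺ w*⁺}, equals -(1/2) Σ_j λ_{L,j} (1 - λ_{L,j}/λ_{R,j}) (w_{L,j}⁺)², and is nonpositive for all w_L⁺ if and only if λ_{L,j} ≤ λ_{R,j} for every j. -/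
/-- With diagonal Rankine-Hugoniot coupling `w*ⱼ⁺ = (λ_{L,j}/λ_{R,j}) w_{L,j}⁺`, the
right-going PDE interface contribution equals
`-(1/2)Σⱼ λ_{L,j}(1 - λ_{L,j}/λ_{R,j})(w_{L,j}⁺)²`, and it is nonpositive for all
data iff `λ_{L,j} ≤ λ_{R,j}` for every `j`. -/
theorem stmt16 (n : ℕ) (lamL lamR : Fin n → ℝ)
    (hL : ∀ i, 0 < lamL i) (hR : ∀ i, 0 < lamR i) :
    (∀ wL : Fin n → ℝ,
      -(1 / 2) * ((∑ i, lamL i * (wL i) ^ 2)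
          - ∑ i, lamR i * ((lamL i / lamR i) * wL i) ^ 2)
        = -(1 / 2) * ∑ i, lamL i * (1 - lamL i / lamR i) * (wL i) ^ 2) ∧
    ((∀ wL : Fin n → ℝ,
        -(1 / 2) * ((∑ i, lamL i * (wL i) ^ 2)
            - ∑ i, lamR i * ((lamL i / lamR i) * wL i) ^ 2) ≤ 0)
      ↔ ∀ j, lamL j ≤ lamR j) := by
  have key : ∀ wL : Fin n → ℝ,
      -(1 / 2) * ((∑ i, lamL i * (wL i) ^ 2)
          - ∑ i, lamR i * ((lamL i / lamR i) * wL i) ^ 2)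
        = -(1 / 2) * ∑ i, lamL i * (1 - lamL i / lamR i) * (wL i) ^ 2 := by
    intro wL
    rw [← Finset.sum_sub_distrib]
    congr 1
    apply Finset.sum_congr rfl
    intro i _
    have h : lamR i ≠ 0 := (hR i).ne'
    field_simp
  refine ⟨key, ?_, ?_⟩
  · intro h j
    have := h (fun i => if i = j then 1 else 0)
    rw [key] at this
    simp only [apply_ite, mul_ite, mul_one, mul_zero, one_pow, ite_pow,
      ne_eq, OfNat.ofNat_ne_zero, not_false_eq_true, zero_pow,
      Finset.sum_ite_eq', Finset.mem_univ, if_true] at this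
    have h1 : 0 ≤ lamL j * (1 - lamL j / lamR j) := by linarith
    have h2 : 0 ≤ 1 - lamL j / lamR j :=
      nonneg_of_mul_nonneg_right h1 (hL j)
    exact (div_le_one (hR j)).mp (sub_nonneg.mp h2)
  · intro h wL
    rw [key]
    have : 0 ≤ ∑ i, lamL i * (1 - lamL i / lamR i) * (wL i) ^ 2 := by
      apply Finset.sum_nonneg
      intro i _
      have h1 : lamL i / lamR i ≤ 1 := (div_le_one (hR i)).mpr (h i)
      have h2 := (hL i).le
      exact mul_nonneg (mul_nonneg h2 (by linarith)) (sq_nonneg _)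
    linarith
end
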